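/- Let (X,μ) be a standard probability space with a countable group Γ acting ergodically by measure-preserving transformations. Then for any measurable sets E, F ⊆ X with μ(E) = μ(F) > 0, there exists a measure-preserving automorphism T of (X,μ) such that T(x) lies in the Γ-orbit of x for almost every x, and μ(T(E) Δ F) = 0. -/

import Mathlib

open MeasureTheory Set Pointwise
open scoped ENNReal symmDiff Function

namespace FullGroupAux

variable {X : Type*} [MeasurableSpace X] (μ : Measure X) [IsProbabilityMeasure μ]
variable (Γ : Type*) [Group Γ] [Countable Γ] [MulAction Γ X]

lemma smul_set_eq_preimage (γ : Γ) (S : Set X) :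
    γ • S = (fun x : X => γ⁻¹ • x) ⁻¹' S := by
  rw [Set.preimage_smul, inv_inv]

lemma smul_measurable (hmeas : ∀ γ : Γ, Measurable fun x : X => γ • x)
    {S : Set X} (hS : MeasurableSet S) (γ : Γ) : MeasurableSet (γ • S) := by
  rw [smul_set_eq_preimage]; exact hmeas γ⁻¹ hS

lemma smul_measure (hmp : ∀ γ : Γ, MeasurePreserving (fun x : X => γ • x) μ μ)
    {S : Set X} (hS : MeasurableSet S) (γ : Γ) : μ (γ • S) = μ S := by
  rw [smul_set_eq_preimage]
  exact (hmp γ⁻¹).measure_preimage hS.nullMeasurableSet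

/-- the value of a candidate group element -/
noncomputable def val (A B : Set X) (γ : Γ) : ℝ≥0∞ :=
  μ (A ∩ (fun x : X => γ • x) ⁻¹' B)

lemma pick_ex (A B : Set X) :
    ∃ γ : Γ, (⨆ γ' : Γ, val μ Γ A B γ') / 2 ≤ val μ Γ A B γ := by
  set s := ⨆ γ' : Γ, val μ Γ A B γ' with hs
  rcases eq_or_ne s 0 with h0 | h0
  · exact ⟨1, by simp [h0]⟩
  · have hle : s ≠ ⊤ := by
      refine ne_top_of_le_ne_top (by simp : (1 : ℝ≥0∞) ≠ ⊤) (iSup_le fun γ => ?_)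
      exact prob_le_one
    have h2 : s / 2 < s := ENNReal.half_lt_self h0 hle
    rw [hs, lt_iSup_iff] at h2
    obtain ⟨γ, hγ⟩ := h2
    exact ⟨γ, hγ.le⟩

noncomputable def pick (A B : Set X) : Γ := (pick_ex μ Γ A B).choose

lemma pick_spec (A B : Set X) :
    (⨆ γ' : Γ, val μ Γ A B γ') / 2 ≤ val μ Γ A B (pick μ Γ A B) :=
  (pick_ex μ Γ A B).choose_spec

/-- the piece extracted from `(A, B)` -/
noncomputable def pc (A B : Set X) : Set X :=
  A ∩ (fun x : X => pick μ Γ A B • x) ⁻¹' B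

/-- the recursive sequence of remaining sets -/
noncomputable def seq (E F : Set X) : ℕ → Set X × Set X
  | 0 => (E, F)
  | n + 1 =>
      ((seq E F n).1 \ pc μ Γ (seq E F n).1 (seq E F n).2,
       (seq E F n).2 \ pick μ Γ (seq E F n).1 (seq E F n).2 • pc μ Γ (seq E F n).1 (seq E F n).2)

variable (E F : Set X)

noncomputable def gs (n : ℕ) : Γ := pick μ Γ (seq μ Γ E F n).1 (seq μ Γ E F n).2

noncomputable def P (n : ℕ) : Set X := pc μ Γ (seq μ Γ E F n).1 (seq μ Γ E F n).2

noncomputable def Q (n : ℕ) : Set X := gs μ Γ E F n • P μ Γ E F n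

lemma P_def (n : ℕ) :
    P μ Γ E F n = (seq μ Γ E F n).1 ∩ (fun x : X => gs μ Γ E F n • x) ⁻¹' (seq μ Γ E F n).2 :=
  rfl

lemma seq_succ (n : ℕ) :
    seq μ Γ E F (n + 1) =
      ((seq μ Γ E F n).1 \ P μ Γ E F n, (seq μ Γ E F n).2 \ Q μ Γ E F n) := rfl


variable {μ Γ E F}

section Props

variable (hmeas : ∀ γ : Γ, Measurable fun x : X => γ • x)
variable (hmp : ∀ γ : Γ, MeasurePreserving (fun x : X => γ • x) μ μ)
variable (hE : MeasurableSet E) (hF : MeasurableSet F)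

include hmeas hE hF in
lemma seq_meas (n : ℕ) :
    MeasurableSet (seq μ Γ E F n).1 ∧ MeasurableSet (seq μ Γ E F n).2 := by
  induction n with
  | zero => exact ⟨hE, hF⟩
  | succ n ih =>
    have hP : MeasurableSet (P μ Γ E F n) := ih.1.inter (hmeas _ ih.2)
    exact ⟨ih.1.diff hP, ih.2.diff (smul_measurable Γ hmeas hP _)⟩

include hmeas hE hF in
lemma P_meas (n : ℕ) : MeasurableSet (P μ Γ E F n) :=
  ((seq_meas hmeas hE hF n).1).inter (hmeas _ ((seq_meas hmeas hE hF n).2))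

include hmeas hE hF in
lemma Q_meas (n : ℕ) : MeasurableSet (Q μ Γ E F n) :=
  smul_measurable Γ hmeas (P_meas hmeas hE hF n) _

lemma P_subset (n : ℕ) : P μ Γ E F n ⊆ (seq μ Γ E F n).1 := inter_subset_left

lemma Q_subset (n : ℕ) : Q μ Γ E F n ⊆ (seq μ Γ E F n).2 := by
  intro y hy
  rw [Q, mem_smul_set_iff_inv_smul_mem] at hy
  have h2 : gs μ Γ E F n • (gs μ Γ E F n)⁻¹ • y ∈ (seq μ Γ E F n).2 := hy.2
  rwa [smul_inv_smul] at h2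

lemma seq_antitone_succ (n : ℕ) :
    (seq μ Γ E F (n + 1)).1 ⊆ (seq μ Γ E F n).1 ∧
    (seq μ Γ E F (n + 1)).2 ⊆ (seq μ Γ E F n).2 :=
  ⟨diff_subset, diff_subset⟩

lemma seq_fst_eq (n : ℕ) :
    (seq μ Γ E F n).1 = E \ ⋃ m ∈ Finset.range n, P μ Γ E F m ∧
    (seq μ Γ E F n).2 = F \ ⋃ m ∈ Finset.range n, Q μ Γ E F m := by
  induction n with
  | zero => simp [seq]
  | succ n ih =>
    refine ⟨?_, ?_⟩
    · show (seq μ Γ E F n).1 \ P μ Γ E F n = _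
      rw [ih.1, diff_diff, Finset.range_add_one, Finset.set_biUnion_insert, union_comm]
    · show (seq μ Γ E F n).2 \ Q μ Γ E F n = _
      rw [ih.2, diff_diff, Finset.range_add_one, Finset.set_biUnion_insert, union_comm]

lemma P_disjoint : Pairwise (Disjoint on (P μ Γ E F)) := by
  have key : ∀ m n, m < n → Disjoint (P μ Γ E F m) (P μ Γ E F n) := by
    intro m n hmn
    have h1 : P μ Γ E F n ⊆ (seq μ Γ E F n).1 := P_subset n
    have h2 : (seq μ Γ E F n).1 ⊆ E \ ⋃ k ∈ Finset.range n, P μ Γ E F k := by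
      rw [(seq_fst_eq n).1]
    refine Disjoint.symm (disjoint_left.mpr fun x hx hx' => ?_)
    have := h2 (h1 hx)
    exact this.2 (mem_biUnion (Finset.mem_range.mpr hmn) hx')
  intro m n hmn
  rcases lt_or_gt_of_ne hmn with h | h
  · exact key m n h
  · exact (key n m h).symm

lemma Q_disjoint : Pairwise (Disjoint on (Q μ Γ E F)) := by
  have key : ∀ m n, m < n → Disjoint (Q μ Γ E F m) (Q μ Γ E F n) := by
    intro m n hmn
    have h1 : Q μ Γ E F n ⊆ (seq μ Γ E F n).2 := Q_subset n
    have h2 : (seq μ Γ E F n).2 ⊆ F \ ⋃ k ∈ Finset.range n, Q μ Γ E F k := by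
      rw [(seq_fst_eq n).2]
    refine Disjoint.symm (disjoint_left.mpr fun x hx hx' => ?_)
    have := h2 (h1 hx)
    exact this.2 (mem_biUnion (Finset.mem_range.mpr hmn) hx')
  intro m n hmn
  rcases lt_or_gt_of_ne hmn with h | h
  · exact key m n h
  · exact (key n m h).symm

lemma P_subset_E (n : ℕ) : P μ Γ E F n ⊆ E :=
  (P_subset n).trans (by rw [(seq_fst_eq n).1]; exact diff_subset)

lemma Q_subset_F (n : ℕ) : Q μ Γ E F n ⊆ F :=
  (Q_subset n).trans (by rw [(seq_fst_eq n).2]; exact diff_subset)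

include hmeas hmp hE hF in
lemma Q_measure_eq (n : ℕ) : μ (Q μ Γ E F n) = μ (P μ Γ E F n) :=
  smul_measure μ Γ hmp (P_meas hmeas hE hF n) _

end Props


section Main

variable (hmeas : ∀ γ : Γ, Measurable fun x : X => γ • x)
variable (hmp : ∀ γ : Γ, MeasurePreserving (fun x : X => γ • x) μ μ)
variable (herg : ∀ A : Set X, MeasurableSet A → (∀ γ : Γ, (fun x : X => γ • x) ⁻¹' A = A) →
      μ A = 0 ∨ μ A = 1)
variable (hE : MeasurableSet E) (hF : MeasurableSet F)

include hmeas hmp herg in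
lemma erg_meet {A B : Set X} (hA : MeasurableSet A) (hB : MeasurableSet B)
    (hA0 : 0 < μ A) (hB0 : 0 < μ B) :
    ∃ γ : Γ, 0 < μ (A ∩ (fun x : X => γ • x) ⁻¹' B) := by
  set S := ⋃ γ : Γ, (fun x : X => γ • x) ⁻¹' A with hS
  have hSm : MeasurableSet S := MeasurableSet.iUnion fun γ => hmeas γ hA
  have hinv : ∀ δ : Γ, (fun x : X => δ • x) ⁻¹' S = S := by
    intro δ
    rw [hS, preimage_iUnion]
    ext x
    simp only [mem_iUnion, mem_preimage]
    constructor
    · rintro ⟨γ, h⟩; exact ⟨γ * δ, by simpa [mul_smul] using h⟩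
    · rintro ⟨γ, h⟩; exact ⟨γ * δ⁻¹, by simpa [mul_smul] using h⟩
  have hAsub : A ⊆ S := fun x hx => mem_iUnion.mpr ⟨1, by simpa using hx⟩
  have hS1 : μ S = 1 := by
    rcases herg S hSm hinv with h | h
    · exact absurd h (lt_of_lt_of_le hA0 (measure_mono hAsub)).ne'
    · exact h
  have hSc : μ Sᶜ = 0 := by
    have := measure_compl hSm (measure_ne_top μ S)
    rw [hS1] at this; simpa using this
  have hBS : μ (B ∩ S) = μ B := by
    apply le_antisymm (measure_mono inter_subset_left)
    calc μ B = μ ((B ∩ S) ∪ (B \ S)) := by rw [inter_union_diff]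
    _ ≤ μ (B ∩ S) + μ (B \ S) := measure_union_le _ _
    _ ≤ μ (B ∩ S) + 0 := by
        gcongr
        exact le_trans (measure_mono (fun x hx => hx.2)) hSc.le
    _ = μ (B ∩ S) := by simp
  obtain ⟨γ, hγ⟩ : ∃ γ : Γ, 0 < μ (B ∩ (fun x : X => γ • x) ⁻¹' A) := by
    by_contra h
    push_neg at h
    have h0 : ∀ γ : Γ, μ (B ∩ (fun x : X => γ • x) ⁻¹' A) = 0 :=
      fun γ => le_antisymm (h γ) zero_le
    have hz : μ (B ∩ S) = 0 := by
      rw [hS, inter_iUnion]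
      exact measure_iUnion_null fun γ => h0 γ
    rw [hBS] at hz
    exact absurd hz hB0.ne'
  refine ⟨γ⁻¹, ?_⟩
  have key : (fun x : X => γ • x) ⁻¹' (A ∩ (fun x : X => γ⁻¹ • x) ⁻¹' B)
      = (fun x : X => γ • x) ⁻¹' A ∩ B := by
    ext x
    simp [inv_smul_smul]
  have hpre := (hmp γ).measure_preimage ((hA.inter (hmeas γ⁻¹ hB)).nullMeasurableSet)
  rw [key] at hpre
  rw [← hpre] at *
  rwa [inter_comm] at hγ

include hmeas hmp hE hF in
lemma seq_measure_eq (hEF : μ E = μ F) (n : ℕ) :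
    μ (seq μ Γ E F n).1 = μ (seq μ Γ E F n).2 := by
  induction n with
  | zero => exact hEF
  | succ n ih =>
    have e1 : (seq μ Γ E F (n + 1)).1 = (seq μ Γ E F n).1 \ P μ Γ E F n := rfl
    have e2 : (seq μ Γ E F (n + 1)).2 = (seq μ Γ E F n).2 \ Q μ Γ E F n := rfl
    rw [e1, e2,
      measure_diff (P_subset n) (P_meas hmeas hE hF n).nullMeasurableSet (measure_ne_top μ _),
      measure_diff (Q_subset n) (Q_meas hmeas hE hF n).nullMeasurableSet (measure_ne_top μ _),
      ih, Q_measure_eq hmeas hmp hE hF n]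

include hmeas hmp herg hE hF in
lemma exhaust_null (hEF : μ E = μ F) :
    μ (E \ ⋃ n, P μ Γ E F n) = 0 ∧ μ (F \ ⋃ n, Q μ Γ E F n) = 0 := by
  have hPm := P_meas (μ := μ) hmeas hE hF
  have hQm := Q_meas (μ := μ) hmeas hE hF
  have hUP : μ (⋃ n, P μ Γ E F n) = ∑' n, μ (P μ Γ E F n) :=
    measure_iUnion P_disjoint hPm
  have hUQ : μ (⋃ n, Q μ Γ E F n) = ∑' n, μ (Q μ Γ E F n) :=
    measure_iUnion Q_disjoint hQm
  have hsum : ∑' n, μ (Q μ Γ E F n) = ∑' n, μ (P μ Γ E F n) :=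
    tsum_congr (Q_measure_eq hmeas hmp hE hF)
  have hUPE : (⋃ n, P μ Γ E F n) ⊆ E := iUnion_subset P_subset_E
  have hUQF : (⋃ n, Q μ Γ E F n) ⊆ F := iUnion_subset Q_subset_F
  have hmA : μ (E \ ⋃ n, P μ Γ E F n) = μ E - μ (⋃ n, P μ Γ E F n) :=
    measure_diff hUPE (MeasurableSet.iUnion hPm).nullMeasurableSet (measure_ne_top μ _)
  have hmB : μ (F \ ⋃ n, Q μ Γ E F n) = μ F - μ (⋃ n, Q μ Γ E F n) :=
    measure_diff hUQF (MeasurableSet.iUnion hQm).nullMeasurableSet (measure_ne_top μ _)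
  have heq : μ (E \ ⋃ n, P μ Γ E F n) = μ (F \ ⋃ n, Q μ Γ E F n) := by
    rw [hmA, hmB, hEF, hUP, hUQ, hsum]
  suffices h : μ (E \ ⋃ n, P μ Γ E F n) = 0 by exact ⟨h, heq ▸ h⟩
  by_contra h0
  have hApos : 0 < μ (E \ ⋃ n, P μ Γ E F n) := zero_lt_iff.mpr h0
  have hBpos : 0 < μ (F \ ⋃ n, Q μ Γ E F n) := heq ▸ hApos
  obtain ⟨γ, hγ⟩ := erg_meet hmeas hmp herg (hE.diff (MeasurableSet.iUnion hPm))
    (hF.diff (MeasurableSet.iUnion hQm)) hApos hBpos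
  set c := μ ((E \ ⋃ n, P μ Γ E F n) ∩
    (fun x : X => γ • x) ⁻¹' (F \ ⋃ n, Q μ Γ E F n)) with hcdef
  have hsubA : ∀ n, E \ ⋃ m, P μ Γ E F m ⊆ (seq μ Γ E F n).1 := by
    intro n
    rw [(seq_fst_eq n).1]
    exact diff_subset_diff_right (iUnion₂_subset fun i _ => subset_iUnion _ i)
  have hsubB : ∀ n, F \ ⋃ m, Q μ Γ E F m ⊆ (seq μ Γ E F n).2 := by
    intro n
    rw [(seq_fst_eq n).2]
    exact diff_subset_diff_right (iUnion₂_subset fun i _ => subset_iUnion _ i)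
  have hc : ∀ n, c / 2 ≤ μ (P μ Γ E F n) := by
    intro n
    have h1 : c ≤ val μ Γ (seq μ Γ E F n).1 (seq μ Γ E F n).2 γ :=
      measure_mono (inter_subset_inter (hsubA n) (preimage_mono (hsubB n)))
    have h2 : c ≤ ⨆ γ' : Γ, val μ Γ (seq μ Γ E F n).1 (seq μ Γ E F n).2 γ' :=
      h1.trans (le_iSup _ γ)
    calc c / 2 ≤ (⨆ γ' : Γ, val μ Γ (seq μ Γ E F n).1 (seq μ Γ E F n).2 γ') / 2 := by gcongr
    _ ≤ val μ Γ (seq μ Γ E F n).1 (seq μ Γ E F n).2 (pick μ Γ _ _) := pick_spec μ Γ _ _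
    _ = μ (P μ Γ E F n) := rfl
  have htop : (⊤ : ℝ≥0∞) ≤ ∑' n, μ (P μ Γ E F n) := by
    have hne : c / 2 ≠ 0 := by
      simp only [ne_eq, ENNReal.div_eq_zero_iff]
      push_neg
      exact ⟨hγ.ne', by simp⟩
    rw [← ENNReal.tsum_const_eq_top_of_ne_zero (α := ℕ) hne]
    exact ENNReal.tsum_le_tsum hc
  have hle1 : ∑' n, μ (P μ Γ E F n) ≤ 1 := by
    rw [← hUP]; exact prob_le_one
  exact absurd (le_trans htop hle1) (by simp)

end Main


omit [IsProbabilityMeasure μ] in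
lemma union_null_left {s t : Set X} (hs : μ s = 0) : μ (s ∪ t) = μ t := by
  apply le_antisymm
  · calc μ (s ∪ t) ≤ μ s + μ t := measure_union_le _ _
    _ = μ t := by rw [hs, zero_add]
  · exact measure_mono subset_union_right

omit [IsProbabilityMeasure μ] in
lemma inter_compl_null {s t : Set X} (hs : μ s = 0) : μ (sᶜ ∩ t) = μ t := by
  apply le_antisymm (measure_mono inter_subset_right)
  calc μ t ≤ μ ((sᶜ ∩ t) ∪ s) := measure_mono (fun x hx => by
    by_cases h : x ∈ s
    · exact Or.inr h
    · exact Or.inl ⟨h, hx⟩)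
  _ ≤ μ (sᶜ ∩ t) + μ s := measure_union_le _ _
  _ = μ (sᶜ ∩ t) := by rw [hs, add_zero]

end FullGroupAux

open FullGroupAux

/-- In an ergodic measure-preserving action of a countable group `Γ` on a
standard probability space `(X, μ)`, for any measurable sets `E`, `F` of equal positive
measure there is an inner automorphism (full-group element) `T` with `μ(T(E) Δ F) = 0`. -/
theorem full_group_transitive_on_equal_measure_sets
    {X : Type*} [MeasurableSpace X] (μ : Measure X) [IsProbabilityMeasure μ]
    (Γ : Type*) [Group Γ] [Countable Γ] [MulAction Γ X]
    (hmeas : ∀ γ : Γ, Measurable fun x : X => γ • x)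
    (hmp : ∀ γ : Γ, MeasurePreserving (fun x : X => γ • x) μ μ)
    (herg : ∀ A : Set X, MeasurableSet A → (∀ γ : Γ, (fun x : X => γ • x) ⁻¹' A = A) →
      μ A = 0 ∨ μ A = 1)
    (E F : Set X) (hE : MeasurableSet E) (hF : MeasurableSet F)
    (hEF : μ E = μ F) (hpos : 0 < μ E) :
    ∃ T : X ≃ᵐ X, MeasurePreserving T μ μ ∧
      (∀ᵐ x ∂μ, ∃ γ : Γ, T x = γ • x) ∧
      μ (symmDiff (T '' E) F) = 0 := by
  classical
  have hEc : MeasurableSet Eᶜ := hE.compl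
  have hFc : MeasurableSet Fᶜ := hF.compl
  have hEFc : μ Eᶜ = μ Fᶜ := by
    rw [measure_compl hE (measure_ne_top μ E), measure_compl hF (measure_ne_top μ F), hEF]
  obtain ⟨hnull1, hnull2⟩ := exhaust_null hmeas hmp herg hE hF hEF
  obtain ⟨hnull3, hnull4⟩ := exhaust_null hmeas hmp herg hEc hFc hEFc
  set C : ℕ ⊕ ℕ → Set X := Sum.elim (P μ Γ E F) (P μ Γ Eᶜ Fᶜ) with hCdef
  set g : ℕ ⊕ ℕ → Γ := Sum.elim (gs μ Γ E F) (gs μ Γ Eᶜ Fᶜ) with hgdef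
  set R : ℕ ⊕ ℕ → Set X := fun i => g i • C i with hRdef
  have hCmeas : ∀ i, MeasurableSet (C i) := by
    rintro (n | n)
    · exact P_meas hmeas hE hF n
    · exact P_meas hmeas hEc hFc n
  have hRmeas : ∀ i, MeasurableSet (R i) :=
    fun i => smul_measurable Γ hmeas (hCmeas i) (g i)
  have hCE : ∀ n, C (Sum.inl n) ⊆ E := fun n => P_subset_E n
  have hCEc : ∀ n, C (Sum.inr n) ⊆ Eᶜ := fun n => P_subset_E n
  have hRF : ∀ n, R (Sum.inl n) ⊆ F := fun n => Q_subset_F n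
  have hRFc : ∀ n, R (Sum.inr n) ⊆ Fᶜ := fun n => Q_subset_F n
  have hCdis : Pairwise (Disjoint on C) := by
    rintro (m | m) (n | n) hmn
    · exact P_disjoint (fun h => hmn (by rw [h]))
    · exact disjoint_compl_right.mono (hCE m) (hCEc n)
    · exact (disjoint_compl_right.mono (hCE n) (hCEc m)).symm
    · exact P_disjoint (fun h => hmn (by rw [h]))
  have hRdis : Pairwise (Disjoint on R) := by
    rintro (m | m) (n | n) hmn
    · exact Q_disjoint (fun h => hmn (by rw [h]))
    · exact disjoint_compl_right.mono (hRF m) (hRFc n)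
    · exact (disjoint_compl_right.mono (hRF n) (hRFc m)).symm
    · exact Q_disjoint (fun h => hmn (by rw [h]))
  have hCun : μ ((⋃ i, C i)ᶜ) = 0 := by
    refine measure_mono_null (fun x hx => ?_) (measure_union_null hnull1 hnull3)
    simp only [mem_compl_iff, mem_iUnion, not_exists] at hx
    by_cases hxE : x ∈ E
    · exact Or.inl ⟨hxE, by simpa [mem_iUnion] using (show ∀ n, x ∉ P μ Γ E F n from fun n => hx (Sum.inl n))⟩
    · exact Or.inr ⟨hxE, by simpa [mem_iUnion] using (show ∀ n, x ∉ P μ Γ Eᶜ Fᶜ n from fun n => hx (Sum.inr n))⟩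
  have hRun : μ ((⋃ i, R i)ᶜ) = 0 := by
    refine measure_mono_null (fun x hx => ?_) (measure_union_null hnull2 hnull4)
    simp only [mem_compl_iff, mem_iUnion, not_exists] at hx
    by_cases hxF : x ∈ F
    · exact Or.inl ⟨hxF, by simpa [mem_iUnion] using (show ∀ n, x ∉ Q μ Γ E F n from fun n => hx (Sum.inl n))⟩
    · exact Or.inr ⟨hxF, by simpa [mem_iUnion] using (show ∀ n, x ∉ Q μ Γ Eᶜ Fᶜ n from fun n => hx (Sum.inr n))⟩
  -- the bad invariant null set
  set N0 : Set X := (⋃ i, C i)ᶜ ∪ (⋃ i, R i)ᶜ with hN0def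
  have hN0m : MeasurableSet N0 :=
    ((MeasurableSet.iUnion hCmeas).compl).union ((MeasurableSet.iUnion hRmeas).compl)
  have hN0null : μ N0 = 0 := measure_union_null hCun hRun
  set N : Set X := ⋃ γ : Γ, (fun x : X => γ • x) ⁻¹' N0 with hNdef
  have hNm : MeasurableSet N := MeasurableSet.iUnion fun γ => hmeas γ hN0m
  have hNnull : μ N = 0 := measure_iUnion_null fun γ => by
    rw [(hmp γ).measure_preimage hN0m.nullMeasurableSet]; exact hN0null
  have hNinv : ∀ (δ : Γ) (x : X), x ∉ N → δ • x ∉ N := by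
    intro δ x hx hmem
    apply hx
    rw [hNdef, mem_iUnion] at hmem ⊢
    obtain ⟨γ, h⟩ := hmem
    exact ⟨γ * δ, by simpa [mul_smul] using h⟩
  have hN0N : N0 ⊆ N := fun x hx => mem_iUnion.mpr ⟨1, by simpa using hx⟩
  have hNmem : ∀ (δ : Γ) (x : X), δ • x ∈ N ↔ x ∈ N := by
    intro δ x
    constructor
    · intro h
      by_contra hx
      exact hNinv δ x hx h
    · intro h
      by_contra hdx
      have := hNinv δ⁻¹ (δ • x) hdx
      rw [inv_smul_smul] at this
      exact this h
  have hsmulNc : ∀ δ : Γ, δ • (Nᶜ : Set X) = Nᶜ := by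
    intro δ
    ext x
    rw [mem_smul_set_iff_inv_smul_mem, mem_compl_iff, mem_compl_iff, hNmem δ⁻¹ x]
  -- unique indices
  have hxC : ∀ x, x ∉ N → ∃ i, x ∈ C i := by
    intro x hx
    have h0 : x ∉ N0 := fun h => hx (hN0N h)
    have : x ∈ ⋃ i, C i := by
      by_contra h; exact h0 (Or.inl h)
    exact mem_iUnion.mp this
  have hxR : ∀ x, x ∉ N → ∃ i, x ∈ R i := by
    intro x hx
    have h0 : x ∉ N0 := fun h => hx (hN0N h)
    have : x ∈ ⋃ i, R i := by
      by_contra h; exact h0 (Or.inr h)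
    exact mem_iUnion.mp this
  obtain ⟨idxC, hidxC⟩ : ∃ f : X → ℕ ⊕ ℕ, ∀ x i, x ∈ C i → f x = i := by
    refine ⟨fun x => if h : ∃ i, x ∈ C i then h.choose else Sum.inl 0, ?_⟩
    intro x i hxi
    have hex : ∃ j, x ∈ C j := ⟨i, hxi⟩
    simp only [dif_pos hex]
    by_contra hne
    exact Set.disjoint_left.mp (hCdis hne) hex.choose_spec hxi
  obtain ⟨idxR, hidxR⟩ : ∃ f : X → ℕ ⊕ ℕ, ∀ x i, x ∈ R i → f x = i := by
    refine ⟨fun x => if h : ∃ i, x ∈ R i then h.choose else Sum.inl 0, ?_⟩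
    intro x i hxi
    have hex : ∃ j, x ∈ R j := ⟨i, hxi⟩
    simp only [dif_pos hex]
    by_contra hne
    exact Set.disjoint_left.mp (hRdis hne) hex.choose_spec hxi
  have hmemC : ∀ x, x ∉ N → x ∈ C (idxC x) := by
    intro x hx
    obtain ⟨i, hi⟩ := hxC x hx
    rw [hidxC x i hi]; exact hi
  have hmemR : ∀ x, x ∉ N → x ∈ R (idxR x) := by
    intro x hx
    obtain ⟨i, hi⟩ := hxR x hx
    rw [hidxR x i hi]; exact hi
  -- the map and its inverse
  set f : X → X := fun x => if x ∈ N then x else g (idxC x) • x with hfdef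
  set finv : X → X := fun y => if y ∈ N then y else (g (idxR y))⁻¹ • y with hfinvdef
  have hfN : ∀ x ∈ N, f x = x := fun x hx => if_pos hx
  have hfoff : ∀ x, x ∉ N → f x = g (idxC x) • x := fun x hx => if_neg hx
  have hfinvN : ∀ x ∈ N, finv x = x := fun x hx => if_pos hx
  have hfinvoff : ∀ x, x ∉ N → finv x = (g (idxR x))⁻¹ • x := fun x hx => if_neg hx
  have hfR : ∀ x, x ∉ N → f x ∈ R (idxC x) ∧ f x ∉ N := by
    intro x hx
    rw [hfoff x hx]
    exact ⟨smul_mem_smul_set (hmemC x hx), hNinv _ x hx⟩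
  have hleft : ∀ x, finv (f x) = x := by
    intro x
    by_cases hx : x ∈ N
    · rw [hfN x hx, hfinvN _ hx]
    · obtain ⟨hmem, hfn⟩ := hfR x hx
      rw [hfinvoff _ hfn, hidxR _ _ hmem, hfoff x hx, inv_smul_smul]
  have hright : ∀ y, f (finv y) = y := by
    intro y
    by_cases hy : y ∈ N
    · rw [hfinvN _ hy, hfN _ hy]
    · obtain ⟨j, hj⟩ := hxR y hy
      have hjeq : idxR y = j := hidxR _ _ hj
      have hxmem : (g j)⁻¹ • y ∈ C j := by
        rw [← mem_smul_set_iff_inv_smul_mem]; exact hj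
      have hxnotN : (g j)⁻¹ • y ∉ N := hNinv _ y hy
      rw [hfinvoff _ hy, hjeq, hfoff _ hxnotN, hidxC _ _ hxmem, smul_inv_smul]
  -- preimage formulas
  have hfpre : ∀ S : Set X,
      f ⁻¹' S = (N ∩ S) ∪ ⋃ i, ((Nᶜ ∩ C i) ∩ (fun x : X => g i • x) ⁻¹' S) := by
    intro S
    ext x
    by_cases hx : x ∈ N
    · simp only [mem_preimage, hfN x hx, mem_union, mem_inter_iff, hx, true_and, mem_iUnion]
      constructor
      · exact Or.inl
      · rintro (h | ⟨i, ⟨⟨hxc, _⟩, _⟩⟩)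
        · exact h
        · exact absurd hx hxc
    · have hmem := hmemC x hx
      simp only [mem_preimage, hfoff x hx, mem_union, mem_inter_iff, mem_iUnion]
      constructor
      · intro hS
        exact Or.inr ⟨idxC x, ⟨⟨hx, hmem⟩, hS⟩⟩
      · rintro (⟨hN', _⟩ | ⟨i, ⟨⟨_, hCi⟩, hS⟩⟩)
        · exact absurd hN' hx
        · rwa [hidxC _ _ hCi]
  have hfinvpre : ∀ S : Set X,
      finv ⁻¹' S = (N ∩ S) ∪ ⋃ i, ((Nᶜ ∩ R i) ∩ (fun x : X => (g i)⁻¹ • x) ⁻¹' S) := by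
    intro S
    ext x
    by_cases hx : x ∈ N
    · simp only [mem_preimage, hfinvN x hx, mem_union, mem_inter_iff, hx, true_and, mem_iUnion]
      constructor
      · exact Or.inl
      · rintro (h | ⟨i, ⟨⟨hxc, _⟩, _⟩⟩)
        · exact h
        · exact absurd hx hxc
    · have hmem := hmemR x hx
      simp only [mem_preimage, hfinvoff x hx, mem_union, mem_inter_iff, mem_iUnion]
      constructor
      · intro hS
        exact Or.inr ⟨idxR x, ⟨⟨hx, hmem⟩, hS⟩⟩
      · rintro (⟨hN', _⟩ | ⟨i, ⟨⟨_, hRi⟩, hS⟩⟩)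
        · exact absurd hN' hx
        · rwa [hidxR _ _ hRi]
  have hfmeas : Measurable f := by
    intro S hS
    rw [hfpre]
    exact ((hNm.inter hS).union (MeasurableSet.iUnion fun i =>
      ((hNm.compl.inter (hCmeas i)).inter (hmeas _ hS))))
  have hfinvmeas : Measurable finv := by
    intro S hS
    rw [hfinvpre]
    exact ((hNm.inter hS).union (MeasurableSet.iUnion fun i =>
      ((hNm.compl.inter (hRmeas i)).inter (hmeas _ hS))))
  -- measure preservation
  have hmapeq : ∀ S : Set X, MeasurableSet S → μ (f ⁻¹' S) = μ S := by
    intro S hS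
    rw [hfpre, union_null_left (measure_mono_null inter_subset_left hNnull)]
    have hDdis : Pairwise (Disjoint on fun i => (Nᶜ ∩ C i) ∩ (fun x : X => g i • x) ⁻¹' S) := by
      intro i j hij
      exact (hCdis hij).mono (inter_subset_left.trans inter_subset_right)
        (inter_subset_left.trans inter_subset_right)
    have hDmeas : ∀ i, MeasurableSet ((Nᶜ ∩ C i) ∩ (fun x : X => g i • x) ⁻¹' S) :=
      fun i => (hNm.compl.inter (hCmeas i)).inter (hmeas _ hS)
    rw [measure_iUnion hDdis hDmeas]
    have hterm : ∀ i, μ ((Nᶜ ∩ C i) ∩ (fun x : X => g i • x) ⁻¹' S)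
        = μ ((Nᶜ ∩ R i) ∩ S) := by
      intro i
      have hDeq : (Nᶜ ∩ C i) ∩ (fun x : X => g i • x) ⁻¹' S
          = (fun x : X => g i • x) ⁻¹' ((g i • (Nᶜ ∩ C i)) ∩ S) := by
        ext x
        simp only [mem_inter_iff, mem_preimage, mem_smul_set_iff_inv_smul_mem, inv_smul_smul]
      have hsm : g i • (Nᶜ ∩ C i) = Nᶜ ∩ R i := by
        rw [smul_set_inter, hsmulNc]
      rw [hDeq, (hmp (g i)).measure_preimage, hsm]
      exact ((smul_measurable Γ hmeas (hNm.compl.inter (hCmeas i)) (g i)).inter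
        hS).nullMeasurableSet
    rw [tsum_congr hterm]
    have hRdis' : Pairwise (Disjoint on fun i => (Nᶜ ∩ R i) ∩ S) := by
      intro i j hij
      exact (hRdis hij).mono (inter_subset_left.trans inter_subset_right)
        (inter_subset_left.trans inter_subset_right)
    rw [← measure_iUnion hRdis' (fun i => (hNm.compl.inter (hRmeas i)).inter hS)]
    have hun : (⋃ i, (Nᶜ ∩ R i) ∩ S) = Nᶜ ∩ S := by
      ext x
      simp only [mem_iUnion, mem_inter_iff, mem_compl_iff]
      constructor
      · rintro ⟨i, ⟨⟨hx, _⟩, hxS⟩⟩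
        exact ⟨hx, hxS⟩
      · rintro ⟨hx, hxS⟩
        exact ⟨idxR x, ⟨⟨hx, hmemR x hx⟩, hxS⟩⟩
    rw [hun, inter_compl_null hNnull]
  set T : X ≃ᵐ X := ⟨⟨f, finv, hleft, hright⟩, hfmeas, hfinvmeas⟩ with hTdef
  have hTcoe : ⇑T = f := rfl
  refine ⟨T, ⟨hfmeas, ?_⟩, ?_, ?_⟩
  · ext S hS
    rw [hTcoe, Measure.map_apply hfmeas hS]
    exact hmapeq S hS
  · have hae : ∀ᵐ x ∂μ, x ∉ N := measure_eq_zero_iff_ae_notMem.mp hNnull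
    filter_upwards [hae] with x hx
    refine ⟨g (idxC x), ?_⟩
    rw [hTcoe]
    exact hfoff x hx
  · rw [hTcoe]
    refine measure_mono_null ?_ hNnull
    intro y hy
    rw [Set.mem_symmDiff] at hy
    by_contra hyN
    rcases hy with ⟨⟨x, hxE, rfl⟩, hyF⟩ | ⟨hyF, hynim⟩
    · -- f x ∈ f '' E but not in F : impossible off N
      have hxN : x ∉ N := by
        intro hxN
        exact hyN (by rw [hfN x hxN]; exact hxN)
      obtain ⟨hmem, _⟩ := hfR x hxN
      rcases hi : idxC x with n | n
      · apply hyF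
        rw [hi] at hmem
        exact hRF n hmem
      · have hC := hmemC x hxN
        rw [hi] at hC
        exact (hCEc n hC) hxE
    · -- y ∈ F but y ∉ f '' E : impossible off N
      apply hynim
      obtain ⟨j, hj⟩ := hxR y hyN
      cases j with
      | inl n =>
        have hxmem : (g (Sum.inl n))⁻¹ • y ∈ C (Sum.inl n) := by
          rw [← mem_smul_set_iff_inv_smul_mem]; exact hj
        have hxE : (g (Sum.inl n))⁻¹ • y ∈ E := hCE n hxmem
        have hxnotN : (g (Sum.inl n))⁻¹ • y ∉ N := hNinv _ y hyN
        refine ⟨(g (Sum.inl n))⁻¹ • y, hxE, ?_⟩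
        rw [hfoff _ hxnotN, hidxC _ _ hxmem, smul_inv_smul]
      | inr n =>
        exact absurd hyF (hRFc n hj)
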